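/- There is a well-defined surjective group homomorphism f from the pure braid group P₄ to the free group F₂ = ⟨x,y⟩ determined by f(A₁₂) = x, f(A₁₃) = y, f(A₂₃) = y⁻¹x⁻¹, f(A₁₄) = y⁻¹x⁻¹, f(A₂₄) = x y x⁻¹, f(A₃₄) = x. -/

import Mathlib

/-- Index type for the generators `A_{i,j}`, `i < j`, of the pure braid group. -/
def PBGen (n : ℕ) : Type := {p : Fin n × Fin n // p.1 < p.2}

/-- The free-group generator corresponding to `A_{i,j}`. -/
def A {n : ℕ} (i j : Fin n) (h : i < j) : FreeGroup (PBGen n) :=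
  FreeGroup.of ⟨(i, j), h⟩

/-- The standard pure braid relators. -/
def pureBraidRels (n : ℕ) : Set (FreeGroup (PBGen n)) :=
  { w | ∃ (i j r s : Fin n) (hij : i < j) (hrs : r < s),
      (((i < r ∧ s < j) ∨ s < i) ∧
        w = (A r s hrs)⁻¹ * A i j hij * A r s hrs * (A i j hij)⁻¹)
    ∨ (∃ hrj : r < j, s = i ∧
        w = (A r s hrs)⁻¹ * A i j hij * A r s hrs *
          (A r j hrj * A i j hij * (A r j hrj)⁻¹)⁻¹)
    ∨ (∃ hsj : s < j, r = i ∧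
        w = (A r s hrs)⁻¹ * A i j hij * A r s hrs *
          (A i j hij * A s j hsj * A i j hij * (A s j hsj)⁻¹ * (A i j hij)⁻¹)⁻¹)
    ∨ (∃ (hrj : r < j) (hsj : s < j), r < i ∧ i < s ∧
        w = (A r s hrs)⁻¹ * A i j hij * A r s hrs *
          ((A r j hrj * A s j hsj * (A r j hrj)⁻¹ * (A s j hsj)⁻¹) * A i j hij *
            (A r j hrj * A s j hsj * (A r j hrj)⁻¹ * (A s j hsj)⁻¹)⁻¹)⁻¹) }

/-- The pure braid group `Pₙ`, as a presented group. -/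
def PureBraid (n : ℕ) : Type := PresentedGroup (pureBraidRels n)

instance (n : ℕ) : Group (PureBraid n) := by unfold PureBraid; infer_instance

/-- The generator `A_{i,j}` of the pure braid group. -/
def gen {n : ℕ} (i j : Fin n) (h : i < j) : PureBraid n :=
  PresentedGroup.of (⟨(i, j), h⟩ : PBGen n)

/-- The assignment `A₁₂ ↦ x`, `A₁₃ ↦ y`, `A₂₃ ↦ y⁻¹x⁻¹`, `A₁₄ ↦ y⁻¹x⁻¹`,
`A₂₄ ↦ xyx⁻¹`, `A₃₄ ↦ x` determines a well-defined surjective homomorphism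
`P₄ → F₂`. -/

private def gmap : PBGen 4 → FreeGroup (Fin 2) := fun p =>
  match p.1.1.val, p.1.2.val with
  | 0, 1 => FreeGroup.of 0
  | 0, 2 => FreeGroup.of 1
  | 1, 2 => (FreeGroup.of 1)⁻¹ * (FreeGroup.of 0)⁻¹
  | 0, 3 => (FreeGroup.of 1)⁻¹ * (FreeGroup.of 0)⁻¹
  | 1, 3 => FreeGroup.of 0 * FreeGroup.of 1 * (FreeGroup.of 0)⁻¹
  | _, _ => FreeGroup.of 0

private lemma lift_A (i j : Fin 4) (h : i < j) :
    FreeGroup.lift gmap (A i j h) = gmap ⟨(i, j), h⟩ := FreeGroup.lift_apply_of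

set_option maxHeartbeats 4000000 in
private lemma gmap_rels : ∀ r ∈ pureBraidRels 4, FreeGroup.lift gmap r = 1 := by
  rintro w ⟨i, j, r, s, hij, hrs, ⟨hC, rfl⟩ | ⟨hrj, hsi, rfl⟩ | ⟨hsj, hri, rfl⟩ |
    ⟨hrj, hsj, h1, h2, rfl⟩⟩ <;>
  fin_cases i <;> fin_cases j <;> fin_cases r <;> fin_cases s <;>
  first
    | exact absurd hij (by decide)
    | exact absurd hrs (by decide)
    | exact absurd hC (by decide)
    | exact absurd hsi (by decide)
    | exact absurd hri (by decide)
    | exact absurd h1 (by decide)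
    | exact absurd h2 (by decide)
    | exact absurd hrj (by decide)
    | exact absurd hsj (by decide)
    | (simp only [MonoidHom.map_mul, MonoidHom.map_inv, lift_A, gmap]; group)

theorem P4_onto_F2 :
    ∃ f : PureBraid 4 →* FreeGroup (Fin 2),
      Function.Surjective f ∧
      f (gen 0 1 (by decide)) = FreeGroup.of 0 ∧
      f (gen 0 2 (by decide)) = FreeGroup.of 1 ∧
      f (gen 1 2 (by decide)) = (FreeGroup.of 1)⁻¹ * (FreeGroup.of 0)⁻¹ ∧
      f (gen 0 3 (by decide)) = (FreeGroup.of 1)⁻¹ * (FreeGroup.of 0)⁻¹ ∧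
      f (gen 1 3 (by decide)) = FreeGroup.of 0 * FreeGroup.of 1 * (FreeGroup.of 0)⁻¹ ∧
      f (gen 2 3 (by decide)) = FreeGroup.of 0 := by
  refine ⟨PresentedGroup.toGroup gmap_rels, ?_, ?_, ?_, ?_, ?_, ?_, ?_⟩
  · intro z
    induction z using FreeGroup.induction_on with
    | C1 => exact ⟨1, map_one _⟩
    | of i =>
        fin_cases i
        · refine ⟨gen 0 1 (by decide), (PresentedGroup.toGroup.of gmap_rels).trans ?_⟩
          rfl
        · refine ⟨gen 0 2 (by decide), (PresentedGroup.toGroup.of gmap_rels).trans ?_⟩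
          rfl
    | inv_of x ih => obtain ⟨a, ha⟩ := ih; exact ⟨a⁻¹, by erw [MonoidHom.map_inv, ha]⟩
    | mul x y ihx ihy =>
        obtain ⟨u, hu⟩ := ihx; obtain ⟨v, hv⟩ := ihy
        exact ⟨u * v, by erw [MonoidHom.map_mul, hu, hv]⟩
  all_goals exact (PresentedGroup.toGroup.of gmap_rels).trans rfl
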